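/- arXiv:2603.16763 — 2 statements merged into one kernel-verified Lean document; each statement's English description precedes it below -/
import Mathlib

section
/- Let R be a ring and M a right R-module of type FP_{n+1} for some n ≥ 1. Then for every index set I and every 0 < i ≤ n, Tor_i^R(M, ∏_{I} R) = 0, where ∏_I R denotes the direct product of copies of R viewed as a left R-module. -/
noncomputable section
open Function MulOpposite

/-- `IsFP S n M`: the `S`-module `M` is of type `FPₙ`. -/
def IsFP (S : Type) [Ring S] : ℕ → ModuleCat.{0} S → Prop
  | 0, M => Module.Finite S M
  | n+1, M => ∃ (d : ℕ) (φ : (Fin d → S) →ₗ[S] M), Function.Surjective φ ∧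
      IsFP S n (ModuleCat.of S (LinearMap.ker φ))

/-- Unbundled version of `IsFP`. -/
def IsFPMod (S : Type) [Ring S] (n : ℕ) (M : Type) [AddCommGroup M] [Module S M] : Prop :=
  IsFP S n (ModuleCat.of S M)

section RTensor

variable (R : Type) [Ring R] (M : Type) [AddCommGroup M] [Module Rᵐᵒᵖ M]
  (N : Type) [AddCommGroup N] [Module R N]

/-- The balancing relations for the tensor product of a right `R`-module `M`
(i.e. a left `Rᵐᵒᵖ`-module) and a left `R`-module `N`. -/
def RTensor.rel : AddSubgroup (TensorProduct ℤ M N) :=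
  AddSubgroup.closure {x | ∃ (r : R) (m : M) (n : N),
    x = ((op r • m) ⊗ₜ[ℤ] n) - (m ⊗ₜ[ℤ] (r • n))}

/-- The balanced tensor product `M ⊗_R N` of a right `R`-module and a left `R`-module,
as an abelian group. -/
def RTensor : Type := TensorProduct ℤ M N ⧸ RTensor.rel R M N

instance : AddCommGroup (RTensor R M N) :=
  inferInstanceAs (AddCommGroup (TensorProduct ℤ M N ⧸ RTensor.rel R M N))

/-- The canonical projection. -/
def RTensor.mk : TensorProduct ℤ M N →+ RTensor R M N :=
  QuotientAddGroup.mk' (RTensor.rel R M N)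

/-- Elementary tensors in `RTensor`. -/
def RTensor.tmul (m : M) (n : N) : RTensor R M N := RTensor.mk R M N (m ⊗ₜ[ℤ] n)

theorem RTensor.tmul_balanced (r : R) (m : M) (n : N) :
    RTensor.tmul R M N (op r • m) n = RTensor.tmul R M N m (r • n) := by
  refine (QuotientAddGroup.mk'_eq_mk' _).2 ⟨(m ⊗ₜ[ℤ] (r • n)) - ((op r • m) ⊗ₜ[ℤ] n), ?_, by abel⟩
  have h : ((op r • m) ⊗ₜ[ℤ] n) - (m ⊗ₜ[ℤ] (r • n)) ∈ RTensor.rel R M N :=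
    AddSubgroup.subset_closure ⟨r, m, n, rfl⟩
  simpa [neg_sub] using AddSubgroup.neg_mem _ h

theorem RTensor.tmul_add (m : M) (n n' : N) :
    RTensor.tmul R M N m (n + n') = RTensor.tmul R M N m n + RTensor.tmul R M N m n' := by
  rw [RTensor.tmul, TensorProduct.tmul_add, map_add]; rfl

theorem RTensor.add_tmul (m m' : M) (n : N) :
    RTensor.tmul R M N (m + m') n = RTensor.tmul R M N m n + RTensor.tmul R M N m' n := by
  rw [RTensor.tmul, TensorProduct.add_tmul, map_add]; rfl

theorem RTensor.tmul_zero (m : M) : RTensor.tmul R M N m 0 = 0 := by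
  rw [RTensor.tmul, TensorProduct.tmul_zero, map_zero]

theorem RTensor.zero_tmul (n : N) : RTensor.tmul R M N (0 : M) n = 0 := by
  rw [RTensor.tmul, TensorProduct.zero_tmul, map_zero]

variable {R M N}

/-- Lifting a balanced biadditive map to the balanced tensor product. -/
def RTensor.lift {A : Type} [AddCommGroup A] (f : M →+ N →+ A)
    (hf : ∀ (r : R) (m : M) (n : N), f (op r • m) n = f m (r • n)) :
    RTensor R M N →+ A := by
  refine QuotientAddGroup.lift (RTensor.rel R M N)
    (TensorProduct.lift (LinearMap.mk₂ ℤ (fun m n => f m n)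
      (by intro m₁ m₂ n; simp)
      (by intro z m n; simp)
      (by intro m n₁ n₂; simp)
      (by intro z m n; simp))).toAddMonoidHom ?_
  refine (AddSubgroup.closure_le _).2 ?_
  rintro x ⟨r, m, n, rfl⟩
  simp [hf r m n]

@[simp] theorem RTensor.lift_tmul {A : Type} [AddCommGroup A] (f : M →+ N →+ A)
    (hf : ∀ (r : R) (m : M) (n : N), f (op r • m) n = f m (r • n)) (m : M) (n : N) :
    RTensor.lift f hf (RTensor.tmul R M N m n) = f m n := by
  show QuotientAddGroup.lift _ _ _ (QuotientAddGroup.mk (m ⊗ₜ[ℤ] n)) = _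
  erw [QuotientAddGroup.lift_mk]

end RTensor

section Maps

variable (R : Type) [Ring R] (M : Type) [AddCommGroup M] [Module Rᵐᵒᵖ M]
  {N N' : Type} [AddCommGroup N] [Module R N] [AddCommGroup N'] [Module R N']

/-- Functoriality of the balanced tensor product in the left-module variable. -/
def RTensor.mapRight (g : N →ₗ[R] N') : RTensor R M N →+ RTensor R M N' :=
  RTensor.lift
    { toFun := fun m =>
        { toFun := fun n => RTensor.tmul R M N' m (g n)
          map_zero' := by
            show RTensor.tmul R M N' m (g 0) = 0
            rw [map_zero]; exact RTensor.tmul_zero R M N' m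
          map_add' := by
            intro n n'
            show RTensor.tmul R M N' m (g (n + n')) = _
            rw [map_add]; exact RTensor.tmul_add R M N' m _ _ }
      map_zero' := by
        ext n
        show RTensor.tmul R M N' 0 (g n) = 0
        exact RTensor.zero_tmul R M N' _
      map_add' := by
        intro m m'
        ext n
        show RTensor.tmul R M N' (m + m') (g n) = _
        exact RTensor.add_tmul R M N' m m' _ }
    (by
      intro r m n
      show RTensor.tmul R M N' (op r • m) (g n) = RTensor.tmul R M N' m (g (r • n))
      rw [map_smul]
      exact RTensor.tmul_balanced R M N' r m (g n))

end Maps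

section MapLeft

variable (R : Type) [Ring R] {M M' : Type} [AddCommGroup M] [Module Rᵐᵒᵖ M]
  [AddCommGroup M'] [Module Rᵐᵒᵖ M'] (N : Type) [AddCommGroup N] [Module R N]

/-- Functoriality of the balanced tensor product in the right-module variable. -/
def RTensor.mapLeft (g : M →ₗ[Rᵐᵒᵖ] M') : RTensor R M N →+ RTensor R M' N :=
  RTensor.lift
    { toFun := fun m =>
        { toFun := fun n => RTensor.tmul R M' N (g m) n
          map_zero' := RTensor.tmul_zero R M' N _
          map_add' := fun n n' => RTensor.tmul_add R M' N _ n n' }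
      map_zero' := by
        ext n
        show RTensor.tmul R M' N (g 0) n = 0
        rw [map_zero]; exact RTensor.zero_tmul R M' N n
      map_add' := by
        intro m m'
        ext n
        show RTensor.tmul R M' N (g (m + m')) n = _
        rw [map_add]; exact RTensor.add_tmul R M' N _ _ n }
    (by
      intro r m n
      show RTensor.tmul R M' N (g (op r • m)) n = RTensor.tmul R M' N (g m) (r • n)
      rw [map_smul]
      exact RTensor.tmul_balanced R M' N r (g m) n)

end MapLeft

section Resolutions

variable (S : Type) [Ring S] (N : Type) [AddCommGroup N] [Module S N]

/-- A free resolution `⋯ → F₂ → F₁ → F₀ → N → 0` of a left `S`-module `N`. -/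
structure FreeResolution : Type 1 where
  ι : ℕ → Type
  d : ∀ n : ℕ, ((ι (n+1)) →₀ S) →ₗ[S] ((ι n) →₀ S)
  augm : ((ι 0) →₀ S) →ₗ[S] N
  augm_surj : Function.Surjective augm
  exact_augm : Function.Exact (d 0) augm
  exact : ∀ n : ℕ, Function.Exact (d (n+1)) (d n)

variable (M : Type) [AddCommGroup M] [Module Sᵐᵒᵖ M]

/-- `TorVanishes S M N i` asserts that `Tor_i^S(M, N) = 0`, where `M` is a right
`S`-module and `N` is a left `S`-module: for every free resolution `F_• → N`, the
complex `M ⊗_S F_•` has trivial homology in degree `i`. -/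
def TorVanishes : ℕ → Prop
  | 0 => ∀ res : FreeResolution S N, Function.Surjective (RTensor.mapRight S M (res.d 0))
  | (i+1) => ∀ res : FreeResolution S N,
      Function.Exact (RTensor.mapRight S M (res.d (i+1))) (RTensor.mapRight S M (res.d i))

/-- A left `S`-module `N` is flat if `Tor₁^S(M, N) = 0` for every right `S`-module `M`. -/
def IsFlatModule : Prop :=
  ∀ (M : Type) [AddCommGroup M] [Module Sᵐᵒᵖ M], TorVanishes S N M 1

end Resolutions

/-- `Tor_i^S(M, N) = 0` for a right `S`-module `M` and a left `S`-module `N`. -/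
def TorIsZero (S : Type) [Ring S] (M : Type) [AddCommGroup M] [Module Sᵐᵒᵖ M]
    (N : Type) [AddCommGroup N] [Module S N] (i : ℕ) : Prop :=
  TorVanishes S N M i

section GroupRings

variable (R : Type) [Ring R] (G : Type) [Group G]

/-- The augmentation ring homomorphism `R[G] → R`, `∑ r_g g ↦ ∑ r_g`. -/
def augMap : MonoidAlgebra R G →+* R :=
  MonoidAlgebra.liftNCRingHom (RingHom.id R) (1 : G →* R)
    (fun x y => by simp [Commute.one_right])

/-- The augmentation ideal of `R[G]`, as a left ideal. -/
def augIdeal : Ideal (MonoidAlgebra R G) := RingHom.ker (augMap R G)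

/-- The augmentation ideal of `R[G]`, as a right `R[G]`-module. -/
def augIdealRight : Submodule (MonoidAlgebra R G)ᵐᵒᵖ (MonoidAlgebra R G) where
  carrier := {x | augMap R G x = 0}
  add_mem' := by
    intro a b ha hb
    simp only [Set.mem_setOf_eq, map_add] at *
    rw [ha, hb, add_zero]
  zero_mem' := by simp
  smul_mem' := by
    intro c x hx
    simp only [Set.mem_setOf_eq] at *
    have : c • x = x * c.unop := rfl
    rw [this, map_mul, hx, zero_mul]

/-- The trivial left `R[G]`-module structure on `R`. -/
def trivialModule : Module (MonoidAlgebra R G) R := Module.compHom R (augMap R G)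

/-- The trivial right `R[G]`-module structure on `R`. -/
def trivialModuleRight : Module (MonoidAlgebra R G)ᵐᵒᵖ R :=
  Module.compHom R (RingHom.op (augMap R G))

/-- The group `G` is of type `FPₙ(R)`: the trivial `R[G]`-module `R` is of type `FPₙ`. -/
def GroupIsFP (n : ℕ) : Prop :=
  letI := trivialModule R G
  IsFPMod (MonoidAlgebra R G) n R

end GroupRings
section Novikov

variable (R : Type) [Ring R] (G : Type) [Group G]

/-- Left multiplication by elements of `R` on functions `G → R`. -/
def lmulHom : R →+* Module.End ℤ (G → R) where
  toFun r :=
    { toFun := fun a x => r * a x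
      map_add' := by intro a b; funext x; simp [mul_add]
      map_smul' := by
        intro z a; funext x
        simp only [zsmul_eq_mul, Pi.intCast_apply, Pi.mul_apply, eq_intCast, RingHom.id_apply]
        rw [← mul_assoc, ← Int.cast_comm, mul_assoc]
        norm_cast }
  map_one' := by ext a x; simp
  map_mul' := by intro r s; ext a x; simp [mul_assoc]
  map_zero' := by ext a x; simp
  map_add' := by intro r s; ext a x; simp [add_mul]

/-- The (left) translation action of `G` on functions `G → R`. -/
def translationHom : G →* Module.End ℤ (G → R) where
  toFun h :=
    { toFun := fun a x => a (h⁻¹ * x)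
      map_add' := by intro a b; funext x; simp
      map_smul' := by intro z a; funext x; simp }
  map_one' := by ext a x; simp
  map_mul' := by intro g h; ext a x; simp [mul_assoc]

/-- The convolution action of `R[G]` on functions `G → R`, as a ring homomorphism
into additive endomorphisms. -/
def convolutionRho : MonoidAlgebra R G →+* Module.End ℤ (G → R) :=
  MonoidAlgebra.liftNCRingHom (lmulHom R G) (translationHom R G)
    (by
      intro r h
      ext a x
      simp [lmulHom, translationHom])

/-- The left `R[G]`-module structure on all functions `G → R` given by convolution. -/
def functionsModule : Module (MonoidAlgebra R G) (G → R) :=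
  Module.compHom (G → R) (convolutionRho R G)

/-- The defining support condition for the Novikov ring: for any `c`, only finitely many
elements of the support have `χ`-value at most `c`. -/
def NovikovSet (χ : G →* Multiplicative ℤ) : Set (G → R) :=
  {a | ∀ c : ℤ, {g : G | a g ≠ 0 ∧ (χ g).toAdd ≤ c}.Finite}

theorem NovikovSet.add_mem {χ : G →* Multiplicative ℤ} {a b : G → R}
    (ha : a ∈ NovikovSet R G χ) (hb : b ∈ NovikovSet R G χ) :
    a + b ∈ NovikovSet R G χ := by
  intro c
  refine ((ha c).union (hb c)).subset ?_
  rintro g ⟨hne, hle⟩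
  by_cases h1 : a g = 0
  · exact Or.inr ⟨by intro h2; exact hne (by simp [Pi.add_apply, h1, h2]), hle⟩
  · exact Or.inl ⟨h1, hle⟩

theorem NovikovSet.zero_mem (χ : G →* Multiplicative ℤ) : (0 : G → R) ∈ NovikovSet R G χ := by
  intro c
  convert Set.finite_empty using 1
  ext g; simp

theorem NovikovSet.single_smul_mem {χ : G →* Multiplicative ℤ} (h : G) (b : R) {a : G → R}
    (ha : a ∈ NovikovSet R G χ) :
    (fun x => b * a (h⁻¹ * x)) ∈ NovikovSet R G χ := by
  intro c
  refine ((ha (c - (χ h).toAdd)).image (fun g => h * g)).subset ?_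
  rintro g ⟨hne, hle⟩
  refine ⟨h⁻¹ * g, ⟨?_, ?_⟩, by simp⟩
  · intro h0
    apply hne
    show b * a (h⁻¹ * g) = 0
    rw [h0, mul_zero]
  · have hval : (χ (h⁻¹ * g)).toAdd = -(χ h).toAdd + (χ g).toAdd := by
      simp [map_mul]
    rw [hval]
    omega

/-- The Novikov completion `\widehat{R[G]}^χ` of `R[G]` at the character `χ`,
as a left `R[G]`-submodule of the module of all functions `G → R`. -/
def Novikov (χ : G →* Multiplicative ℤ) :
    @Submodule (MonoidAlgebra R G) (G → R) _ _ (functionsModule R G) :=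
  letI := functionsModule R G
  { carrier := NovikovSet R G χ
    add_mem' := by
      intro a b ha hb
      intro c
      refine ((ha c).union (hb c)).subset ?_
      intro g hg
      rcases hg with ⟨hne, hle⟩
      by_cases h1 : a g = 0
      · exact Or.inr ⟨by intro h2; exact hne (by simp [Pi.add_apply, h1, h2]), hle⟩
      · exact Or.inl ⟨h1, hle⟩
    zero_mem' := by
      intro c
      convert Set.finite_empty using 1
      ext g; simp
    smul_mem' := by
      intro c a ha
      show (convolutionRho R G c) a ∈ NovikovSet R G χ
      induction c using MonoidAlgebra.induction with
      | zero => simpa using NovikovSet.zero_mem R G χ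
      | single_add h b f _ _ ih =>
        rw [map_add]
        have hadd : (convolutionRho R G (MonoidAlgebra.single h b)
              + convolutionRho R G f) a
            = (convolutionRho R G (MonoidAlgebra.single h b)) a
              + (convolutionRho R G f) a := rfl
        rw [hadd]
        refine NovikovSet.add_mem R G ?_ ih
        have hsingle : (convolutionRho R G (MonoidAlgebra.single h b)) a
            = fun x => b * a (h⁻¹ * x) := by
          show (MonoidAlgebra.liftNC ((lmulHom R G) : R →+ Module.End ℤ (G → R))
              ⇑(translationHom R G)) (MonoidAlgebra.single h b) a = _
          rw [MonoidAlgebra.liftNC_single]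
          rfl
        rw [hsingle]
        exact NovikovSet.single_smul_mem R G h b ha }

end Novikov

/-! ### Auxiliary development for `stmt_0`. -/

section Stmt0Aux

variable {R : Type} [Ring R]

section Basics

variable {M : Type} [AddCommGroup M] [Module Rᵐᵒᵖ M] {N : Type} [AddCommGroup N] [Module R N]

theorem RTensor.ind {C : RTensor R M N → Prop} (h0 : C 0)
    (ht : ∀ m n, C (RTensor.tmul R M N m n))
    (ha : ∀ x y, C x → C y → C (x + y)) (x : RTensor R M N) : C x := by
  obtain ⟨t, rfl⟩ := QuotientAddGroup.mk'_surjective (RTensor.rel R M N) x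
  show C (RTensor.mk R M N t)
  induction t using TensorProduct.induction_on with
  | zero => simpa using h0
  | tmul m n => exact ht m n
  | add a b hx hy => rw [map_add]; exact ha _ _ hx hy

theorem RTensor.tmul_sub (m : M) (a b : N) :
    RTensor.tmul R M N m (a - b) = RTensor.tmul R M N m a - RTensor.tmul R M N m b := by
  have h := RTensor.tmul_add R M N m (a - b) b
  rw [sub_add_cancel] at h
  rw [eq_sub_iff_add_eq, ← h]

variable {N' : Type} [AddCommGroup N'] [Module R N'] {N'' : Type} [AddCommGroup N''] [Module R N'']
variable {M' : Type} [AddCommGroup M'] [Module Rᵐᵒᵖ M'] {M'' : Type} [AddCommGroup M''] [Module Rᵐᵒᵖ M'']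

@[simp] theorem RTensor.mapRight_tmul (g : N →ₗ[R] N') (m : M) (n : N) :
    RTensor.mapRight R M g (RTensor.tmul R M N m n) = RTensor.tmul R M N' m (g n) :=
  RTensor.lift_tmul _ _ m n

@[simp] theorem RTensor.mapLeft_tmul (g : M →ₗ[Rᵐᵒᵖ] M') (m : M) (n : N) :
    RTensor.mapLeft R N g (RTensor.tmul R M N m n) = RTensor.tmul R M' N (g m) n :=
  RTensor.lift_tmul _ _ m n

theorem RTensor.mapRight_mapRight (g : N →ₗ[R] N') (g' : N' →ₗ[R] N'') (x : RTensor R M N) :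
    RTensor.mapRight R M g' (RTensor.mapRight R M g x) = RTensor.mapRight R M (g'.comp g) x := by
  induction x using RTensor.ind with
  | h0 => simp
  | ht m n => simp
  | ha a b h1 h2 => simp only [map_add, h1, h2]

theorem RTensor.mapLeft_mapLeft (g : M →ₗ[Rᵐᵒᵖ] M') (g' : M' →ₗ[Rᵐᵒᵖ] M'') (x : RTensor R M N) :
    RTensor.mapLeft R N g' (RTensor.mapLeft R N g x) = RTensor.mapLeft R N (g'.comp g) x := by
  induction x using RTensor.ind with
  | h0 => simp
  | ht m n => simp
  | ha a b h1 h2 => simp only [map_add, h1, h2]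

theorem RTensor.mapLeft_mapRight (g : M →ₗ[Rᵐᵒᵖ] M') (h : N →ₗ[R] N') (x : RTensor R M N) :
    RTensor.mapLeft R N' g (RTensor.mapRight R M h x)
      = RTensor.mapRight R M' h (RTensor.mapLeft R N g x) := by
  induction x using RTensor.ind with
  | h0 => simp
  | ht m n => simp
  | ha a b h1 h2 => simp only [map_add, h1, h2]

theorem RTensor.mapRight_zero (x : RTensor R M N) :
    RTensor.mapRight R M (0 : N →ₗ[R] N') x = 0 := by
  induction x using RTensor.ind with
  | h0 => simp
  | ht m n => simp [RTensor.tmul_zero]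
  | ha a b h1 h2 => simp only [map_add, h1, h2, add_zero]

theorem RTensor.mapLeft_zero (x : RTensor R M N) :
    RTensor.mapLeft R N (0 : M →ₗ[Rᵐᵒᵖ] M') x = 0 := by
  induction x using RTensor.ind with
  | h0 => simp
  | ht m n => simp [RTensor.zero_tmul]
  | ha a b h1 h2 => simp only [map_add, h1, h2, add_zero]

end Basics

section Exactness

open Function

variable {R : Type} [Ring R]

section MR
variable {M : Type} [AddCommGroup M] [Module Rᵐᵒᵖ M]
variable {N₁ N₂ N₃ : Type} [AddCommGroup N₁] [Module R N₁] [AddCommGroup N₂] [Module R N₂]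
  [AddCommGroup N₃] [Module R N₃]

theorem RTensor.mapRight_surjective (g : N₂ →ₗ[R] N₃) (hg : Surjective g) :
    Surjective (RTensor.mapRight R M g) := by
  intro x
  induction x using RTensor.ind with
  | h0 => exact ⟨0, map_zero _⟩
  | ht m n => exact ⟨RTensor.tmul R M N₂ m (surjInv hg n), by simp [surjInv_eq hg]⟩
  | ha a b h1 h2 =>
      obtain ⟨a', rfl⟩ := h1; obtain ⟨b', rfl⟩ := h2; exact ⟨a' + b', map_add _ _ _⟩

theorem RTensor.mapRight_exact (f : N₁ →ₗ[R] N₂) (g : N₂ →ₗ[R] N₃)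
    (hfg : Function.Exact f g) (hg : Surjective g) :
    Function.Exact (RTensor.mapRight R M f) (RTensor.mapRight R M g) := by
  classical
  set H : AddSubgroup (RTensor R M N₂) := (RTensor.mapRight R M f).range with hH
  let π : RTensor R M N₂ →+ RTensor R M N₂ ⧸ H := QuotientAddGroup.mk' H
  have key : ∀ (m : M) (n : N₂), g n = 0 → π (RTensor.tmul R M N₂ m n) = 0 := by
    intro m n hn
    obtain ⟨n₁, rfl⟩ := (hfg n).1 hn
    rw [← RTensor.mapRight_tmul f m n₁]
    exact (QuotientAddGroup.eq_zero_iff _).2 ⟨RTensor.tmul R M N₁ m n₁, rfl⟩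
  have key2 : ∀ (m : M) (a b : N₂), g a = g b →
      π (RTensor.tmul R M N₂ m a) = π (RTensor.tmul R M N₂ m b) := by
    intro m a b hab
    have h0 : π (RTensor.tmul R M N₂ m (a - b)) = 0 := key m _ (by rw [map_sub, hab, sub_self])
    rw [RTensor.tmul_sub, map_sub, sub_eq_zero] at h0
    exact h0
  let s : RTensor R M N₃ →+ RTensor R M N₂ ⧸ H :=
    RTensor.lift
      { toFun := fun m =>
          { toFun := fun n₃ => π (RTensor.tmul R M N₂ m (surjInv hg n₃))
            map_zero' := by
              show π (RTensor.tmul R M N₂ m (surjInv hg 0)) = 0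
              have h := key2 m (surjInv hg 0) 0 (by rw [surjInv_eq hg, map_zero])
              rw [h, RTensor.tmul_zero, map_zero]
            map_add' := by
              intro a b
              show π (RTensor.tmul R M N₂ m (surjInv hg (a + b)))
                = π (RTensor.tmul R M N₂ m (surjInv hg a)) + π (RTensor.tmul R M N₂ m (surjInv hg b))
              have h := key2 m (surjInv hg (a + b)) (surjInv hg a + surjInv hg b)
                (by simp [surjInv_eq hg])
              rw [h, RTensor.tmul_add, map_add] }
        map_zero' := by
          ext n₃
          show π (RTensor.tmul R M N₂ 0 (surjInv hg n₃)) = 0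
          rw [RTensor.zero_tmul, map_zero]
        map_add' := by
          intro m m'
          ext n₃
          show π (RTensor.tmul R M N₂ (m + m') (surjInv hg n₃)) = _
          rw [RTensor.add_tmul, map_add]
          rfl }
      (by
        intro r m n₃
        show π (RTensor.tmul R M N₂ (op r • m) (surjInv hg n₃))
          = π (RTensor.tmul R M N₂ m (surjInv hg (r • n₃)))
        rw [RTensor.tmul_balanced]
        exact key2 m _ _ (by rw [map_smul, surjInv_eq hg, surjInv_eq hg]))
  have hs : ∀ x, s (RTensor.mapRight R M g x) = π x := by
    intro x
    induction x using RTensor.ind with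
    | h0 => simp
    | ht m n =>
        rw [RTensor.mapRight_tmul]
        show RTensor.lift _ _ (RTensor.tmul R M N₃ m (g n)) = _
        rw [RTensor.lift_tmul]
        exact key2 m _ _ (surjInv_eq hg (g n))
    | ha a b h1 h2 => rw [map_add, map_add, map_add, h1, h2]
  intro y
  constructor
  · intro hy
    have hπ : π y = 0 := by rw [← hs y, hy, map_zero]
    obtain ⟨x, hx⟩ := (QuotientAddGroup.eq_zero_iff y).1 hπ
    exact ⟨x, hx⟩
  · rintro ⟨x, rfl⟩
    rw [RTensor.mapRight_mapRight]
    have hc : g.comp f = 0 := LinearMap.ext fun a => hfg.apply_apply_eq_zero a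
    rw [hc, RTensor.mapRight_zero]

end MR

section ML
variable {N : Type} [AddCommGroup N] [Module R N]
variable {M₁ M₂ M₃ : Type} [AddCommGroup M₁] [Module Rᵐᵒᵖ M₁] [AddCommGroup M₂] [Module Rᵐᵒᵖ M₂]
  [AddCommGroup M₃] [Module Rᵐᵒᵖ M₃]

theorem RTensor.sub_tmul (a b : M₁) (n : N) :
    RTensor.tmul R M₁ N (a - b) n = RTensor.tmul R M₁ N a n - RTensor.tmul R M₁ N b n := by
  have h := RTensor.add_tmul R M₁ N (a - b) b n
  rw [sub_add_cancel] at h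
  rw [eq_sub_iff_add_eq, ← h]

theorem RTensor.mapLeft_surjective (g : M₂ →ₗ[Rᵐᵒᵖ] M₃) (hg : Surjective g) :
    Surjective (RTensor.mapLeft R N g) := by
  intro x
  induction x using RTensor.ind with
  | h0 => exact ⟨0, map_zero _⟩
  | ht m n => exact ⟨RTensor.tmul R M₂ N (surjInv hg m) n, by simp [surjInv_eq hg]⟩
  | ha a b h1 h2 =>
      obtain ⟨a', rfl⟩ := h1; obtain ⟨b', rfl⟩ := h2; exact ⟨a' + b', map_add _ _ _⟩

theorem RTensor.mapLeft_exact (f : M₁ →ₗ[Rᵐᵒᵖ] M₂) (g : M₂ →ₗ[Rᵐᵒᵖ] M₃)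
    (hfg : Function.Exact f g) (hg : Surjective g) :
    Function.Exact (RTensor.mapLeft R N f) (RTensor.mapLeft R N g) := by
  classical
  set H : AddSubgroup (RTensor R M₂ N) := (RTensor.mapLeft R N f).range with hH
  let π : RTensor R M₂ N →+ RTensor R M₂ N ⧸ H := QuotientAddGroup.mk' H
  have key : ∀ (m : M₂) (n : N), g m = 0 → π (RTensor.tmul R M₂ N m n) = 0 := by
    intro m n hm
    obtain ⟨m₁, rfl⟩ := (hfg m).1 hm
    rw [← RTensor.mapLeft_tmul f m₁ n]
    exact (QuotientAddGroup.eq_zero_iff _).2 ⟨RTensor.tmul R M₁ N m₁ n, rfl⟩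
  have key2 : ∀ (a b : M₂) (n : N), g a = g b →
      π (RTensor.tmul R M₂ N a n) = π (RTensor.tmul R M₂ N b n) := by
    intro a b n hab
    have h0 : π (RTensor.tmul R M₂ N (a - b) n) = 0 := key _ n (by rw [map_sub, hab, sub_self])
    rw [RTensor.sub_tmul, map_sub, sub_eq_zero] at h0
    exact h0
  let s : RTensor R M₃ N →+ RTensor R M₂ N ⧸ H :=
    RTensor.lift
      { toFun := fun m₃ =>
          { toFun := fun n => π (RTensor.tmul R M₂ N (surjInv hg m₃) n)
            map_zero' := by
              show π (RTensor.tmul R M₂ N (surjInv hg m₃) 0) = 0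
              rw [RTensor.tmul_zero, map_zero]
            map_add' := by
              intro a b
              show π (RTensor.tmul R M₂ N (surjInv hg m₃) (a + b))
                = π (RTensor.tmul R M₂ N (surjInv hg m₃) a) + π (RTensor.tmul R M₂ N (surjInv hg m₃) b)
              rw [RTensor.tmul_add, map_add] }
        map_zero' := by
          ext n
          show π (RTensor.tmul R M₂ N (surjInv hg 0) n) = 0
          have h := key2 (surjInv hg 0) 0 n (by rw [surjInv_eq hg, map_zero])
          rw [h, RTensor.zero_tmul, map_zero]
        map_add' := by
          intro a b
          ext n
          show π (RTensor.tmul R M₂ N (surjInv hg (a + b)) n) = _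
          have h := key2 (surjInv hg (a + b)) (surjInv hg a + surjInv hg b) n
            (by simp [surjInv_eq hg])
          rw [h, RTensor.add_tmul, map_add]
          rfl }
      (by
        intro r m₃ n
        show π (RTensor.tmul R M₂ N (surjInv hg (op r • m₃)) n)
          = π (RTensor.tmul R M₂ N (surjInv hg m₃) (r • n))
        rw [← RTensor.tmul_balanced]
        exact key2 _ _ n (by rw [map_smul, surjInv_eq hg, surjInv_eq hg]))
  have hs : ∀ x, s (RTensor.mapLeft R N g x) = π x := by
    intro x
    induction x using RTensor.ind with
    | h0 => simp
    | ht m n =>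
        rw [RTensor.mapLeft_tmul]
        show RTensor.lift _ _ (RTensor.tmul R M₃ N (g m) n) = _
        rw [RTensor.lift_tmul]
        exact key2 _ _ n (surjInv_eq hg (g m))
    | ha a b h1 h2 => rw [map_add, map_add, map_add, h1, h2]
  intro y
  constructor
  · intro hy
    have hπ : π y = 0 := by rw [← hs y, hy, map_zero]
    obtain ⟨x, hx⟩ := (QuotientAddGroup.eq_zero_iff y).1 hπ
    exact ⟨x, hx⟩
  · rintro ⟨x, rfl⟩
    rw [RTensor.mapLeft_mapLeft]
    have hc : g.comp f = 0 := LinearMap.ext fun a => hfg.apply_apply_eq_zero a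
    rw [hc, RTensor.mapLeft_zero]

end ML

end Exactness


section SumLemmas

variable {R : Type} [Ring R]
variable {M : Type} [AddCommGroup M] [Module Rᵐᵒᵖ M] {N : Type} [AddCommGroup N] [Module R N]

theorem RTensor.tmul_sum {γ : Type*} (m : M) (s : Finset γ) (f : γ → N) :
    RTensor.tmul R M N m (∑ i ∈ s, f i) = ∑ i ∈ s, RTensor.tmul R M N m (f i) := by
  classical
  induction s using Finset.induction_on with
  | empty => simp [RTensor.tmul_zero]
  | insert _ _ h ih => rw [Finset.sum_insert h, Finset.sum_insert h, RTensor.tmul_add, ih]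

theorem RTensor.sum_tmul {γ : Type*} (s : Finset γ) (f : γ → M) (n : N) :
    RTensor.tmul R M N (∑ i ∈ s, f i) n = ∑ i ∈ s, RTensor.tmul R M N (f i) n := by
  classical
  induction s using Finset.induction_on with
  | empty => simp [RTensor.zero_tmul]
  | insert _ _ h ih => rw [Finset.sum_insert h, Finset.sum_insert h, RTensor.add_tmul, ih]

end SumLemmas

section SingleLemmas

variable {R : Type} [Ring R]

theorem smul_pi_single_one {I : Type} [DecidableEq I] (r : R) (α : I) :
    r • (Pi.single α (1 : R) : I → R) = (Pi.single α r : I → R) := by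
  funext β
  show r * (Pi.single α (1 : R) : I → R) β = (Pi.single α r : I → R) β
  by_cases h : β = α
  · subst h; simp
  · simp [Pi.single_apply, h]

theorem op_smul_pi_single_one {d : ℕ} (c : Rᵐᵒᵖ) (j : Fin d) :
    op c.unop • (Pi.single j (1 : Rᵐᵒᵖ) : Fin d → Rᵐᵒᵖ) = (Pi.single j c : Fin d → Rᵐᵒᵖ) := by
  funext j'
  show op c.unop * (Pi.single j (1 : Rᵐᵒᵖ) : Fin d → Rᵐᵒᵖ) j' = (Pi.single j c : Fin d → Rᵐᵒᵖ) j'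
  by_cases h : j' = j
  · subst h; simp
  · simp [Pi.single_apply, h]

end SingleLemmas

section Mu

variable {R : Type} [Ring R]
variable (I : Type) (A : Type) [AddCommGroup A] [Module Rᵐᵒᵖ A]

/-- The natural map `A ⊗_R (∏_I R) → ∏_I A`. -/
def muMap : RTensor R A (I → R) →+ (I → A) :=
  RTensor.lift
    { toFun := fun a =>
        { toFun := fun f => fun α => op (f α) • a
          map_zero' := by funext α; simp
          map_add' := by
            intro f f'
            funext α
            show op ((f + f') α) • a = op (f α) • a + op (f' α) • a
            rw [Pi.add_apply, op_add, add_smul] }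
      map_zero' := by
        ext f α
        show op (f α) • (0 : A) = 0
        simp
      map_add' := by
        intro a a'
        ext f α
        show op (f α) • (a + a') = op (f α) • a + op (f α) • a'
        rw [smul_add] }
    (by
      intro r a f
      show (fun α => op (f α) • (op r • a)) = fun α => op ((r • f) α) • a
      funext α
      rw [Pi.smul_apply, smul_eq_mul, op_mul, mul_smul])

variable {A}

@[simp] theorem muMap_tmul (a : A) (f : I → R) :
    muMap (R := R) I A (RTensor.tmul R A (I → R) a f) = fun α => op (f α) • a :=
  RTensor.lift_tmul _ _ a f

variable {I}

theorem muMap_natural {A' : Type} [AddCommGroup A'] [Module Rᵐᵒᵖ A'] (g : A →ₗ[Rᵐᵒᵖ] A')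
    (x : RTensor R A (I → R)) (α : I) :
    muMap (R := R) I A' (RTensor.mapLeft R (I → R) g x) α = g (muMap (R := R) I A x α) := by
  induction x using RTensor.ind with
  | h0 => simp
  | ht a f => simp
  | ha u v h1 h2 => simp only [map_add, Pi.add_apply, h1, h2]

theorem muMap_bijective_of_fintype [Fintype I] : Function.Bijective (muMap (R := R) I A) := by
  classical
  set σ : (I → A) → RTensor R A (I → R) :=
    fun h => ∑ α : I, RTensor.tmul R A (I → R) (h α) (Pi.single α (1 : R)) with hσ
  have hright : ∀ h, muMap (R := R) I A (σ h) = h := by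
    intro h
    funext β
    rw [hσ, map_sum, Finset.sum_apply]
    simp only [muMap_tmul]
    rw [Finset.sum_eq_single β]
    · simp
    · intro α _ hne
      have h0 : (Pi.single α (1 : R) : I → R) β = 0 := by simp [Pi.single_apply, Ne.symm hne]
      rw [h0, op_zero, zero_smul]
    · intro hmem; exact absurd (Finset.mem_univ β) hmem
  have hleft : ∀ x, σ (muMap (R := R) I A x) = x := by
    intro x
    induction x using RTensor.ind with
    | h0 =>
        rw [map_zero, hσ]
        exact Finset.sum_eq_zero fun α _ => RTensor.zero_tmul R A (I → R) _
    | ht a f =>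
        rw [muMap_tmul, hσ]
        calc (∑ α : I, RTensor.tmul R A (I → R) (op (f α) • a) (Pi.single α (1 : R)))
            = ∑ α : I, RTensor.tmul R A (I → R) a (Pi.single α (f α)) := by
              refine Finset.sum_congr rfl fun α _ => ?_
              rw [RTensor.tmul_balanced, smul_pi_single_one]
          _ = RTensor.tmul R A (I → R) a (∑ α : I, Pi.single α (f α)) :=
              (RTensor.tmul_sum a _ _).symm
          _ = RTensor.tmul R A (I → R) a f := by rw [Finset.univ_sum_single]
    | ha u v h1 h2 =>
        have hadd : ∀ g g', σ (g + g') = σ g + σ g' := by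
          intro g g'
          rw [hσ]
          simp only [Pi.add_apply]
          rw [← Finset.sum_add_distrib]
          exact Finset.sum_congr rfl fun α _ => RTensor.add_tmul R A (I → R) _ _ _
        rw [map_add, hadd, h1, h2]
  constructor
  · intro x y hxy
    rw [← hleft x, ← hleft y, hxy]
  · intro h
    exact ⟨σ h, hright h⟩

theorem muMap_bijective_of_free (d : ℕ) :
    Function.Bijective (muMap (R := R) I (Fin d → Rᵐᵒᵖ)) := by
  classical
  set σ : (I → (Fin d → Rᵐᵒᵖ)) → RTensor R (Fin d → Rᵐᵒᵖ) (I → R) :=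
    fun h => ∑ j : Fin d, RTensor.tmul R (Fin d → Rᵐᵒᵖ) (I → R) (Pi.single j (1 : Rᵐᵒᵖ))
      (fun α => (h α j).unop) with hσ
  have hright : ∀ h, muMap (R := R) I (Fin d → Rᵐᵒᵖ) (σ h) = h := by
    intro h
    funext α
    rw [hσ, map_sum, Finset.sum_apply]
    simp only [muMap_tmul]
    funext j'
    rw [Finset.sum_apply]
    rw [Finset.sum_eq_single j']
    · show (op ((h α j').unop) • (Pi.single j' (1 : Rᵐᵒᵖ) : Fin d → Rᵐᵒᵖ)) j' = h α j'
      rw [op_smul_pi_single_one]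
      simp
    · intro j _ hne
      show (op ((h α j).unop) • (Pi.single j (1 : Rᵐᵒᵖ) : Fin d → Rᵐᵒᵖ)) j' = 0
      rw [op_smul_pi_single_one]
      simp [Pi.single_apply, Ne.symm hne]
    · intro hmem; exact absurd (Finset.mem_univ j') hmem
  have hleft : ∀ x, σ (muMap (R := R) I (Fin d → Rᵐᵒᵖ) x) = x := by
    intro x
    induction x using RTensor.ind with
    | h0 =>
        rw [map_zero, hσ]
        refine Finset.sum_eq_zero fun j _ => ?_
        have h0 : (fun α : I => ((0 : I → Fin d → Rᵐᵒᵖ) α j).unop) = (0 : I → R) := by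
          funext α; simp
        rw [h0, RTensor.tmul_zero]
    | ht v f =>
        rw [muMap_tmul, hσ]
        have hstep : ∀ j : Fin d,
            RTensor.tmul R (Fin d → Rᵐᵒᵖ) (I → R) (Pi.single j (1 : Rᵐᵒᵖ))
              (fun α => (((fun β => op (f β) • v) : I → Fin d → Rᵐᵒᵖ) α j).unop)
            = RTensor.tmul R (Fin d → Rᵐᵒᵖ) (I → R) (Pi.single j (v j)) f := by
          intro j
          have h1 : (fun α => (((fun β => op (f β) • v) : I → Fin d → Rᵐᵒᵖ) α j).unop)
              = (v j).unop • f := by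
            funext α
            show ((op (f α) • v) j).unop = (v j).unop * f α
            rw [Pi.smul_apply, smul_eq_mul, unop_mul]
            simp
          rw [h1, ← RTensor.tmul_balanced, op_smul_pi_single_one]
        calc (∑ j : Fin d, RTensor.tmul R (Fin d → Rᵐᵒᵖ) (I → R) (Pi.single j (1 : Rᵐᵒᵖ))
              (fun α => (((fun β => op (f β) • v) : I → Fin d → Rᵐᵒᵖ) α j).unop))
            = ∑ j : Fin d, RTensor.tmul R (Fin d → Rᵐᵒᵖ) (I → R) (Pi.single j (v j)) f :=
              Finset.sum_congr rfl fun j _ => hstep j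
          _ = RTensor.tmul R (Fin d → Rᵐᵒᵖ) (I → R) (∑ j : Fin d, Pi.single j (v j)) f :=
              (RTensor.sum_tmul _ _ f).symm
          _ = RTensor.tmul R (Fin d → Rᵐᵒᵖ) (I → R) v f := by rw [Finset.univ_sum_single]
    | ha u w h1 h2 =>
        have hadd : ∀ g g', σ (g + g') = σ g + σ g' := by
          intro g g'
          rw [hσ, ← Finset.sum_add_distrib]
          refine Finset.sum_congr rfl fun j _ => ?_
          have h3 : (fun α => (((g + g') α) j).unop)
              = (fun α => ((g α) j).unop) + fun α => ((g' α) j).unop := by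
            funext α
            show ((g α + g' α) j).unop = ((g α) j).unop + ((g' α) j).unop
            rw [Pi.add_apply, unop_add]
          rw [h3, RTensor.tmul_add]
        rw [map_add, hadd, h1, h2]
  constructor
  · intro x y hxy
    rw [← hleft x, ← hleft y, hxy]
  · intro h
    exact ⟨σ h, hright h⟩

end Mu

section Tau

variable {R : Type} [Ring R]
variable (d : ℕ) (Q : Type) [AddCommGroup Q] [Module R Q]

/-- The natural map `R^d ⊗_R Q → Q^d`. -/
def tauMap : RTensor R (Fin d → Rᵐᵒᵖ) Q →+ (Fin d → Q) :=
  RTensor.lift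
    { toFun := fun v =>
        { toFun := fun q => fun j => (v j).unop • q
          map_zero' := by funext j; simp
          map_add' := by
            intro q q'
            funext j
            show (v j).unop • (q + q') = (v j).unop • q + (v j).unop • q'
            rw [smul_add] }
      map_zero' := by
        ext q j
        show ((0 : Fin d → Rᵐᵒᵖ) j).unop • q = 0
        simp
      map_add' := by
        intro v v'
        ext q j
        show ((v + v') j).unop • q = (v j).unop • q + (v' j).unop • q
        rw [Pi.add_apply, unop_add, add_smul] }
    (by
      intro r v q
      show (fun j => ((op r • v : Fin d → Rᵐᵒᵖ) j).unop • q) = fun j => (v j).unop • (r • q)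
      funext j
      rw [Pi.smul_apply, smul_eq_mul, unop_mul, mul_smul]
      simp)

variable {d Q}

@[simp] theorem tauMap_tmul (v : Fin d → Rᵐᵒᵖ) (q : Q) :
    tauMap (R := R) d Q (RTensor.tmul R (Fin d → Rᵐᵒᵖ) Q v q) = fun j => (v j).unop • q :=
  RTensor.lift_tmul _ _ v q

theorem tauMap_natural {Q' : Type} [AddCommGroup Q'] [Module R Q'] (g : Q →ₗ[R] Q')
    (x : RTensor R (Fin d → Rᵐᵒᵖ) Q) (j : Fin d) :
    tauMap (R := R) d Q' (RTensor.mapRight R (Fin d → Rᵐᵒᵖ) g x) j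
      = g (tauMap (R := R) d Q x j) := by
  induction x using RTensor.ind with
  | h0 => simp
  | ht v q => simp
  | ha u w h1 h2 => simp only [map_add, Pi.add_apply, h1, h2]

theorem tauMap_injective : Function.Injective (tauMap (R := R) d Q) := by
  classical
  set σ : (Fin d → Q) → RTensor R (Fin d → Rᵐᵒᵖ) Q :=
    fun h => ∑ j : Fin d, RTensor.tmul R (Fin d → Rᵐᵒᵖ) Q (Pi.single j (1 : Rᵐᵒᵖ)) (h j) with hσ
  have hleft : ∀ x, σ (tauMap (R := R) d Q x) = x := by
    intro x
    induction x using RTensor.ind with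
    | h0 =>
        rw [map_zero, hσ]
        exact Finset.sum_eq_zero fun j _ => RTensor.tmul_zero R (Fin d → Rᵐᵒᵖ) Q _
    | ht v q =>
        rw [tauMap_tmul, hσ]
        calc (∑ j : Fin d, RTensor.tmul R (Fin d → Rᵐᵒᵖ) Q (Pi.single j (1 : Rᵐᵒᵖ))
              ((v j).unop • q))
            = ∑ j : Fin d, RTensor.tmul R (Fin d → Rᵐᵒᵖ) Q (Pi.single j (v j)) q := by
              refine Finset.sum_congr rfl fun j _ => ?_
              rw [← RTensor.tmul_balanced, op_smul_pi_single_one]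
          _ = RTensor.tmul R (Fin d → Rᵐᵒᵖ) Q (∑ j : Fin d, Pi.single j (v j)) q :=
              (RTensor.sum_tmul _ _ q).symm
          _ = RTensor.tmul R (Fin d → Rᵐᵒᵖ) Q v q := by rw [Finset.univ_sum_single]
    | ha u w h1 h2 =>
        have hadd : ∀ g g', σ (g + g') = σ g + σ g' := by
          intro g g'
          rw [hσ, ← Finset.sum_add_distrib]
          exact Finset.sum_congr rfl fun j _ => by rw [Pi.add_apply, RTensor.tmul_add]
        rw [map_add, hadd, h1, h2]
  intro x y hxy
  rw [← hleft x, ← hleft y, hxy]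

/-- Tensoring with a finitely generated free right module preserves injectivity. -/
theorem RTensor.mapRight_injective_free {d : ℕ} {Q Q' : Type} [AddCommGroup Q] [Module R Q]
    [AddCommGroup Q'] [Module R Q']
    (g : Q →ₗ[R] Q') (hg : Function.Injective g) :
    Function.Injective (RTensor.mapRight R (Fin d → Rᵐᵒᵖ) g) := by
  intro x y hxy
  apply tauMap_injective (R := R)
  funext j
  apply hg
  rw [← tauMap_natural (R := R) g x j, ← tauMap_natural (R := R) g y j, hxy]

end Tau



section Supp

variable {R : Type} [Ring R] {ι : Type}

/-- Subtype exactness, over a general ring. -/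
theorem exact_subtype_ker {A B : Type} [AddCommGroup A] [AddCommGroup B] [Module R A]
    [Module R B] (f : A →ₗ[R] B) : Function.Exact (LinearMap.ker f).subtype f := by
  intro y
  constructor
  · intro hy
    exact ⟨⟨y, hy⟩, rfl⟩
  · rintro ⟨⟨z, hz⟩, rfl⟩
    exact hz

theorem exact_subtype_ker_op {A B : Type} [AddCommGroup A] [AddCommGroup B] [Module Rᵐᵒᵖ A]
    [Module Rᵐᵒᵖ B] (f : A →ₗ[Rᵐᵒᵖ] B) :
    Function.Exact (LinearMap.ker f).subtype f := by
  intro y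
  constructor
  · intro hy
    exact ⟨⟨y, hy⟩, rfl⟩
  · rintro ⟨⟨z, hz⟩, rfl⟩
    exact hz

/-- Inclusion of functions on a finite set into finitely supported functions. -/
noncomputable def inclMap (s : Finset ι) : (↥s → R) →ₗ[R] (ι →₀ R) where
  toFun g := ∑ x : ↥s, Finsupp.single (x : ι) (g x)
  map_add' g g' := by
    rw [← Finset.sum_add_distrib]
    refine Finset.sum_congr rfl fun x _ => ?_
    rw [Pi.add_apply, Finsupp.single_add]
  map_smul' r g := by
    rw [RingHom.id_apply, Finset.smul_sum]
    refine Finset.sum_congr rfl fun x _ => ?_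
    rw [Pi.smul_apply, Finsupp.smul_single]

/-- Restriction of a finitely supported function to a finite set. -/
def retrMap (s : Finset ι) : (ι →₀ R) →ₗ[R] (↥s → R) where
  toFun f := fun x => f x
  map_add' f f' := by funext x; simp
  map_smul' r f := by funext x; simp

theorem inclMap_retrMap {s : Finset ι} {f : ι →₀ R} (h : f.support ⊆ s) :
    inclMap (R := R) s (retrMap (R := R) s f) = f := by
  classical
  show (∑ x : ↥s, Finsupp.single (x : ι) (f x)) = f
  rw [Finset.sum_coe_sort s (fun x => Finsupp.single x (f x))]
  rw [← Finset.sum_subset h (fun x _ hx => by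
    rw [Finsupp.notMem_support_iff.1 hx, Finsupp.single_zero])]
  have hs := Finsupp.sum_single f
  rw [Finsupp.sum] at hs
  exact hs

variable {M : Type} [AddCommGroup M] [Module Rᵐᵒᵖ M]

theorem exists_finset_fix (x : RTensor R M (ι →₀ R)) :
    ∃ s : Finset ι, ∀ t : Finset ι, s ⊆ t →
      RTensor.mapRight R M ((inclMap (R := R) t).comp (retrMap (R := R) t)) x = x := by
  classical
  induction x using RTensor.ind with
  | h0 => exact ⟨∅, fun t _ => map_zero _⟩
  | ht m f =>
      refine ⟨f.support, fun t ht => ?_⟩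
      rw [RTensor.mapRight_tmul]
      show RTensor.tmul R M (ι →₀ R) m ((inclMap (R := R) t) ((retrMap (R := R) t) f)) = _
      rw [inclMap_retrMap ht]
  | ha a b h1 h2 =>
      obtain ⟨s1, hs1⟩ := h1
      obtain ⟨s2, hs2⟩ := h2
      refine ⟨s1 ∪ s2, fun t ht => ?_⟩
      rw [map_add, hs1 t (Finset.union_subset_iff.1 ht).1, hs2 t (Finset.union_subset_iff.1 ht).2]

/-- Tensoring an injection of right modules with a free left module is injective. -/
theorem RTensor.mapLeft_injective_finsupp {M' : Type} [AddCommGroup M'] [Module Rᵐᵒᵖ M']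
    (g : M →ₗ[Rᵐᵒᵖ] M') (hg : Function.Injective g) :
    Function.Injective (RTensor.mapLeft R (ι →₀ R) g) := by
  rw [injective_iff_map_eq_zero]
  intro x hx
  obtain ⟨s, hs⟩ := exists_finset_fix (R := R) x
  have hx' : RTensor.mapLeft R (↥s → R) g (RTensor.mapRight R M (retrMap (R := R) s) x) = 0 := by
    rw [RTensor.mapLeft_mapRight, hx, map_zero]
  have hmu : muMap (R := R) ↥s M (RTensor.mapRight R M (retrMap (R := R) s) x) = 0 := by
    funext α
    apply hg
    rw [← muMap_natural g _ α, hx', map_zero]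
    simp
  have hx0 : RTensor.mapRight R M (retrMap (R := R) s) x = 0 := by
    apply (muMap_bijective_of_fintype (R := R) (I := ↥s) (A := M)).1
    rw [hmu, map_zero]
  have := hs s (le_refl s)
  rw [← this, ← RTensor.mapRight_mapRight, hx0, map_zero]

end Supp

section Base

theorem isFPMod_succ_iff {S : Type} [Ring S] {n : ℕ} {A : Type} [AddCommGroup A] [Module S A] :
    IsFPMod S (n + 1) A ↔ ∃ (d : ℕ) (φ : (Fin d → S) →ₗ[S] A),
      Function.Surjective φ ∧ IsFPMod S n ↥(LinearMap.ker φ) := Iff.rfl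

variable {R : Type} [Ring R] {I : Type}

theorem muMap_injective_of_fp1 {A : Type} [AddCommGroup A] [Module Rᵐᵒᵖ A]
    (hA : IsFPMod Rᵐᵒᵖ 1 A) : Function.Injective (muMap (R := R) I A) := by
  obtain ⟨b, φ, hφ, hker⟩ := isFPMod_succ_iff.1 hA
  haveI : Module.Finite Rᵐᵒᵖ ↥(LinearMap.ker φ) := hker
  obtain ⟨a, ψ, hψ⟩ := Module.Finite.exists_fin' Rᵐᵒᵖ ↥(LinearMap.ker φ)
  set θ : (Fin a → Rᵐᵒᵖ) →ₗ[Rᵐᵒᵖ] (Fin b → Rᵐᵒᵖ) := (LinearMap.ker φ).subtype.comp ψ with hθdef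
  have hθ : ∀ w, φ (θ w) = 0 := fun w => (ψ w).2
  have hθr : ∀ v, φ v = 0 → ∃ w, θ w = v := by
    intro v hv
    obtain ⟨w, hw⟩ := hψ ⟨v, hv⟩
    exact ⟨w, by rw [hθdef]; show ((ψ w : ↥(LinearMap.ker φ)) : Fin b → Rᵐᵒᵖ) = v; rw [hw]⟩
  rw [injective_iff_map_eq_zero]
  intro x hx
  obtain ⟨y, rfl⟩ := RTensor.mapLeft_surjective (N := I → R) φ hφ x
  have h1 : ∀ α, φ (muMap (R := R) I (Fin b → Rᵐᵒᵖ) y α) = 0 := by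
    intro α
    rw [← muMap_natural φ y α, hx]
    simp
  choose c hc using fun α => hθr (muMap (R := R) I (Fin b → Rᵐᵒᵖ) y α) (h1 α)
  obtain ⟨z, hz⟩ := (muMap_bijective_of_free (R := R) (I := I) a).2 c
  have h2 : RTensor.mapLeft R (I → R) θ z = y := by
    apply (muMap_bijective_of_free (R := R) (I := I) b).1
    funext α
    rw [muMap_natural θ z α, hz]
    exact hc α
  have h3 : φ.comp θ = 0 := LinearMap.ext fun w => hθ w
  rw [← h2, RTensor.mapLeft_mapLeft, h3]
  exact RTensor.mapLeft_zero z

end Base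

section FPFacts

variable {S : Type} [Ring S]

theorem IsFP.mono : ∀ (n : ℕ) (M : ModuleCat.{0} S), IsFP S (n + 1) M → IsFP S n M := by
  intro n
  induction n with
  | zero =>
      intro M hM
      obtain ⟨d, φ, hφ, _⟩ := hM
      show Module.Finite S M
      exact Module.Finite.of_surjective φ hφ
  | succ k ih =>
      intro M hM
      obtain ⟨d, φ, hφ, h⟩ := hM
      exact ⟨d, φ, hφ, ih _ h⟩

theorem IsFP.of_le : ∀ {m n : ℕ}, m ≤ n → ∀ (M : ModuleCat.{0} S), IsFP S n M → IsFP S m M := by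
  intro m n h
  induction h with
  | refl => exact fun M hM => hM
  | step h ih =>
      intro M hM
      exact ih M (IsFP.mono _ M hM)

theorem IsFPMod.of_le {m n : ℕ} (h : m ≤ n) {A : Type} [AddCommGroup A] [Module S A]
    (hA : IsFPMod S n A) : IsFPMod S m A :=
  IsFP.of_le h _ hA

end FPFacts

section Core

variable {R : Type} [Ring R]

theorem core_injective
    {A : Type} [AddCommGroup A] [Module Rᵐᵒᵖ A]
    {d : ℕ} (φ : (Fin d → Rᵐᵒᵖ) →ₗ[Rᵐᵒᵖ] A) (hφ : Function.Surjective φ)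
    {F Q : Type} [AddCommGroup F] [Module R F] [AddCommGroup Q] [Module R Q]
    (ψ : F →ₗ[R] Q) (hψ : Function.Surjective ψ)
    (H1 : Function.Injective (RTensor.mapLeft R Q (LinearMap.ker φ).subtype)) :
    Function.Injective (RTensor.mapRight R A (LinearMap.ker ψ).subtype) := by
  rw [injective_iff_map_eq_zero]
  intro x hx
  obtain ⟨y, rfl⟩ := RTensor.mapLeft_surjective (N := ↥(LinearMap.ker ψ)) φ hφ x
  rw [← RTensor.mapLeft_mapRight] at hx
  -- hx : mapLeft φ (mapRight ιK y) = 0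
  obtain ⟨w, hw⟩ := ((RTensor.mapLeft_exact (N := F) (LinearMap.ker φ).subtype φ
    (exact_subtype_ker_op φ) hφ) _).1 hx
  -- hw : mapLeft ιL w = mapRight ιK y
  have hv0 : RTensor.mapLeft R Q (LinearMap.ker φ).subtype
      (RTensor.mapRight R ↥(LinearMap.ker φ) ψ w) = 0 := by
    rw [RTensor.mapLeft_mapRight, hw, RTensor.mapRight_mapRight]
    have hcomp : ψ.comp (LinearMap.ker ψ).subtype = 0 := LinearMap.ext fun k => k.2
    rw [hcomp]
    exact RTensor.mapRight_zero y
  have hv : RTensor.mapRight R ↥(LinearMap.ker φ) ψ w = 0 :=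
    H1 (by rw [hv0, map_zero])
  obtain ⟨u, hu⟩ := ((RTensor.mapRight_exact (M := ↥(LinearMap.ker φ))
    (LinearMap.ker ψ).subtype ψ (exact_subtype_ker ψ) hψ) w).1 hv
  -- hu : mapRight ιK u = w
  have hy : RTensor.mapLeft R ↥(LinearMap.ker ψ) (LinearMap.ker φ).subtype u = y := by
    apply RTensor.mapRight_injective_free (R := R) (d := d) (LinearMap.ker ψ).subtype
      (Submodule.injective_subtype _)
    rw [← RTensor.mapLeft_mapRight, hu, hw]
  rw [← hy, RTensor.mapLeft_mapLeft]
  have hcomp2 : φ.comp (LinearMap.ker φ).subtype = 0 := LinearMap.ext fun l => l.2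
  rw [hcomp2]
  exact RTensor.mapLeft_zero u

end Core

section Phi

variable (R : Type) [Ring R]

/-- The inductive currency: tensoring with `Q` preserves the embedding of the kernel of a
finite presentation stage into a finitely generated free module, for `FP_{i+1}` modules. -/
def PhiProp (i : ℕ) (Q : Type) [AddCommGroup Q] [Module R Q] : Prop :=
  ∀ (A : Type) [AddCommGroup A] [Module Rᵐᵒᵖ A], IsFPMod Rᵐᵒᵖ (i + 1) A →
    ∀ (e : ℕ) (g : A →ₗ[Rᵐᵒᵖ] (Fin e → Rᵐᵒᵖ)), Function.Injective g →
      Function.Injective (RTensor.mapLeft R Q g)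

variable {R}

theorem phi_zero (I : Type) : PhiProp R 0 (I → R) := by
  intro A _ _ hA e g hg
  rw [injective_iff_map_eq_zero]
  intro x hx
  have h2 : muMap (R := R) I A x = 0 := by
    funext α
    apply hg
    rw [← muMap_natural g x α, hx, map_zero]
    simp
  exact muMap_injective_of_fp1 hA (by rw [h2, map_zero])

theorem phi_succ {i : ℕ} {Q : Type} [AddCommGroup Q] [Module R Q] (hQ : PhiProp R i Q)
    {ι : Type} (ψ : (ι →₀ R) →ₗ[R] Q) (hψ : Function.Surjective ψ) :
    PhiProp R (i + 1) ↥(LinearMap.ker ψ) := by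
  intro A _ _ hA e g hg
  obtain ⟨d, φ, hφ, hker⟩ := isFPMod_succ_iff.1 hA
  have H1 : Function.Injective (RTensor.mapLeft R Q (LinearMap.ker φ).subtype) :=
    hQ _ hker d (LinearMap.ker φ).subtype (Submodule.injective_subtype _)
  have hcore := core_injective φ hφ ψ hψ H1
  rw [injective_iff_map_eq_zero]
  intro x hx
  have h2 : RTensor.mapLeft R (ι →₀ R) g
      (RTensor.mapRight R A (LinearMap.ker ψ).subtype x) = 0 := by
    rw [RTensor.mapLeft_mapRight, hx, map_zero]
  have h3 : RTensor.mapRight R A (LinearMap.ker ψ).subtype x = 0 :=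
    RTensor.mapLeft_injective_finsupp g hg (by rw [h2, map_zero])
  exact hcore (by rw [h3, map_zero])

end Phi

section Assembly

variable {R : Type} [Ring R] {I : Type}

/-- A stage of the syzygy tower of a free resolution of `∏_I R`. -/
structure SyzPack (R : Type) [Ring R] (I : Type) (res : FreeResolution R (I → R)) (j : ℕ) :
    Type 1 where
  Q : Type
  [iA : AddCommGroup Q]
  [iM : Module R Q]
  ψ : ((res.ι j) →₀ R) →ₗ[R] Q
  surj : Function.Surjective ψ
  phi : PhiProp R j Q
  comp_zero : ∀ x, ψ (res.d j x) = 0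
  ker_sub : ∀ y, ψ y = 0 → y ∈ Set.range (res.d j)

attribute [instance] SyzPack.iA SyzPack.iM

noncomputable def pack (res : FreeResolution R (I → R)) : (j : ℕ) → SyzPack R I res j
  | 0 =>
      { Q := I → R
        ψ := res.augm
        surj := res.augm_surj
        phi := phi_zero I
        comp_zero := fun x => res.exact_augm.apply_apply_eq_zero x
        ker_sub := fun y hy => (res.exact_augm y).1 hy }
  | (j+1) =>
      let P := pack res j
      { Q := ↥(LinearMap.ker P.ψ)
        ψ := LinearMap.codRestrict (LinearMap.ker P.ψ) (res.d j)
          (fun x => LinearMap.mem_ker.2 (P.comp_zero x))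
        surj := by
          rintro ⟨q, hq⟩
          obtain ⟨x, hx⟩ := P.ker_sub q (LinearMap.mem_ker.1 hq)
          exact ⟨x, Subtype.ext (by rw [LinearMap.codRestrict_apply]; exact hx)⟩
        phi := phi_succ P.phi P.ψ P.surj
        comp_zero := fun x => Subtype.ext (by
          rw [LinearMap.codRestrict_apply, ZeroMemClass.coe_zero]
          exact (res.exact j).apply_apply_eq_zero x)
        ker_sub := fun y hy => (res.exact j y).1 (by
          have h := congrArg Subtype.val hy
          rw [LinearMap.codRestrict_apply, ZeroMemClass.coe_zero] at h
          exact h) }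

end Assembly

end Stmt0Aux
theorem torVanishes_succ_iff (S : Type) [Ring S] (N : Type) [AddCommGroup N] [Module S N]
    (M : Type) [AddCommGroup M] [Module Sᵐᵒᵖ M] (i : ℕ) :
    TorVanishes S N M (i + 1) ↔ ∀ res : FreeResolution S N,
      Function.Exact (RTensor.mapRight S M (res.d (i + 1))) (RTensor.mapRight S M (res.d i)) :=
  Iff.rfl

/-- If `M` is a right `R`-module of type `FP_{n+1}` with `n ≥ 1`, then
`Tor_i^R(M, ∏_I R) = 0` for all `0 < i ≤ n` and every index set `I`. -/
theorem stmt_0 (R : Type) [Ring R] (M : Type) [AddCommGroup M] [Module Rᵐᵒᵖ M]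
    (n : ℕ) (hn : 1 ≤ n) (hM : IsFPMod Rᵐᵒᵖ (n + 1) M) (I : Type) :
    ∀ i : ℕ, 0 < i → i ≤ n → TorIsZero R M (I → R) i := by
  intro i hi hin
  obtain ⟨m, rfl⟩ : ∃ m, i = m + 1 := ⟨i - 1, by omega⟩
  show TorVanishes R (I → R) M (m + 1)
  rw [torVanishes_succ_iff]
  intro res
  have P : SyzPack R I res m := pack res m
  have hM2 : IsFPMod Rᵐᵒᵖ (m + 1 + 1) M := IsFPMod.of_le (by omega) hM
  obtain ⟨d, φM, hφM, hkerM⟩ := isFPMod_succ_iff.1 hM2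
  have H1 : Function.Injective (RTensor.mapLeft R P.Q (LinearMap.ker φM).subtype) :=
    P.phi _ hkerM d _ (Submodule.injective_subtype _)
  have hcore := core_injective φM hφM P.ψ P.surj H1
  set ψ' : ((res.ι (m + 1)) →₀ R) →ₗ[R] ↥(LinearMap.ker P.ψ) :=
    LinearMap.codRestrict (LinearMap.ker P.ψ) (res.d m)
      (fun x => LinearMap.mem_ker.2 (P.comp_zero x)) with hψ'
  have hsurj' : Function.Surjective ψ' := by
    rintro ⟨q, hq⟩
    obtain ⟨x, hx⟩ := P.ker_sub q (LinearMap.mem_ker.1 hq)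
    exact ⟨x, Subtype.ext (by rw [hψ', LinearMap.codRestrict_apply]; exact hx)⟩
  have hex : Function.Exact (res.d (m + 1)) ψ' := by
    intro z
    have hiff : ψ' z = 0 ↔ res.d m z = 0 := by
      constructor
      · intro h
        have h2 := congrArg Subtype.val h
        rw [hψ', LinearMap.codRestrict_apply, ZeroMemClass.coe_zero] at h2
        exact h2
      · intro h
        exact Subtype.ext (by rw [hψ', LinearMap.codRestrict_apply, h, ZeroMemClass.coe_zero])
    rw [hiff]
    exact res.exact m z
  have hcomp : ((LinearMap.ker P.ψ).subtype).comp ψ' = res.d m :=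
    LinearMap.ext fun z => by
      rw [LinearMap.comp_apply, Submodule.subtype_apply, LinearMap.codRestrict_apply]
  intro y
  constructor
  · intro hy
    refine ((RTensor.mapRight_exact (M := M) (res.d (m + 1)) ψ' hex hsurj') y).1 (hcore ?_)
    rw [map_zero, RTensor.mapRight_mapRight, hcomp]
    exact hy
  · rintro ⟨x, rfl⟩
    rw [RTensor.mapRight_mapRight]
    have hc : (res.d m).comp (res.d (m + 1)) = 0 :=
      LinearMap.ext fun a => (res.exact m).apply_apply_eq_zero a
    rw [hc]
    exact RTensor.mapRight_zero x
end
end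

section
/- The wreath product ℤ ≀ ℤ = (⊕_{i∈ℤ} ℤ) ⋊ ℤ, where ℤ acts by shifting coordinates, is residually {poly-ℤ and virtually abelian}: for every nontrivial element g there is a quotient of ℤ ≀ ℤ that is both poly-ℤ and virtually abelian in which the image of g is nontrivial. -/
noncomputable section
open Function

/-- The shift automorphism of `⊕_{i ∈ ℤ} ℤ`, shifting coordinates by one. -/
def shiftAut : (ℤ →₀ ℤ) ≃+ (ℤ →₀ ℤ) := Finsupp.domCongr (Equiv.addLeft 1)

/-- The action of `ℤ` on `⊕_{i ∈ ℤ} ℤ` by shifting coordinates. -/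
def wrAction : Multiplicative ℤ →* MulAut (Multiplicative (ℤ →₀ ℤ)) :=
  zpowersHom _ (AddEquiv.toMultiplicative shiftAut)

/-- The wreath product `ℤ ≀ ℤ = (⊕_{i ∈ ℤ} ℤ) ⋊ ℤ`. -/
def WrGroup : Type := Multiplicative (ℤ →₀ ℤ) ⋊[wrAction] Multiplicative ℤ

instance : Group WrGroup :=
  inferInstanceAs (Group (Multiplicative (ℤ →₀ ℤ) ⋊[wrAction] Multiplicative ℤ))

/-- A group is poly-`ℤ` if it admits a finite subnormal series whose successive quotients
are infinite cyclic. -/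
def IsPolyZ (Q : Type) [Group Q] : Prop :=
  ∃ (n : ℕ) (s : Fin (n + 1) → Subgroup Q), s 0 = ⊥ ∧ s (Fin.last n) = ⊤ ∧
    ∀ i : Fin n, s i.castSucc ≤ s i.succ ∧
      ∃ f : ↥(s i.succ) →* Multiplicative ℤ, Function.Surjective f ∧
        f.ker = (s i.castSucc).subgroupOf (s i.succ)

/-- A group is virtually abelian if it has an abelian subgroup of finite index. -/
def IsVirtuallyAbelian (Q : Type) [Group Q] : Prop :=
  ∃ H : Subgroup Q, H.index ≠ 0 ∧ ∀ a b : ↥H, a * b = b * a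

/-- The cyclic shift automorphism of `⊕_{i ∈ ℤ/n} ℤ`. -/
def shiftZAut (n : ℕ) : (ZMod n →₀ ℤ) ≃+ (ZMod n →₀ ℤ) :=
  Finsupp.domCongr (Equiv.addLeft (1 : ZMod n))

/-- The action of `ℤ` on `⊕_{i ∈ ℤ/n} ℤ` by cyclic permutation of coordinates. -/
def wrActionZ (n : ℕ) : Multiplicative ℤ →* MulAut (Multiplicative (ZMod n →₀ ℤ)) :=
  zpowersHom _ (AddEquiv.toMultiplicative (shiftZAut n))

/-- The quotient `(⊕_{i ∈ ℤ/n} ℤ) ⋊ ℤ` of `ℤ ≀ ℤ`. -/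
def WrModGroup (n : ℕ) : Type :=
  Multiplicative (ZMod n →₀ ℤ) ⋊[wrActionZ n] Multiplicative ℤ

instance (n : ℕ) : Group (WrModGroup n) :=
  inferInstanceAs (Group (Multiplicative (ZMod n →₀ ℤ) ⋊[wrActionZ n] Multiplicative ℤ))

/-- Summing coordinates congruent mod `n`: the map `⊕_{i ∈ ℤ} ℤ → ⊕_{i ∈ ℤ/n} ℤ`. -/
def sumModMap (n : ℕ) : (ℤ →₀ ℤ) →+ (ZMod n →₀ ℤ) :=
  Finsupp.mapDomain.addMonoidHom (Int.cast : ℤ → ZMod n)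

-- the multiplicative version of sumModMap
def Smul (n : ℕ) : Multiplicative (ℤ →₀ ℤ) →* Multiplicative (ZMod n →₀ ℤ) :=
  AddMonoidHom.toMultiplicative (sumModMap n)

lemma key_step (n : ℕ) (f : ℤ →₀ ℤ) :
    sumModMap n (shiftAut f) = shiftZAut n (sumModMap n f) := by
  show sumModMap n (Finsupp.equivMapDomain _ f)
      = Finsupp.equivMapDomain _ (sumModMap n f)
  rw [Finsupp.equivMapDomain_eq_mapDomain, Finsupp.equivMapDomain_eq_mapDomain]
  show Finsupp.mapDomain _ (Finsupp.mapDomain _ f) = Finsupp.mapDomain _ (Finsupp.mapDomain _ f)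
  rw [← Finsupp.mapDomain_comp, ← Finsupp.mapDomain_comp]
  congr 1
  funext x
  show ((1 + x : ℤ) : ZMod n) = (1 : ZMod n) + (x : ZMod n)
  push_cast
  ring

lemma key_zpow (n : ℕ) (k : ℤ) :
    ∀ x : Multiplicative (ℤ →₀ ℤ),
    Smul n (((AddEquiv.toMultiplicative shiftAut : MulAut (Multiplicative (ℤ →₀ ℤ))) ^ k) x)
      = ((AddEquiv.toMultiplicative (shiftZAut n) : MulAut (Multiplicative (ZMod n →₀ ℤ))) ^ k)
          (Smul n x) := by
  set A : MulAut (Multiplicative (ℤ →₀ ℤ)) := AddEquiv.toMultiplicative shiftAut with hA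
  set B : MulAut (Multiplicative (ZMod n →₀ ℤ)) := AddEquiv.toMultiplicative (shiftZAut n) with hB
  have hstep : ∀ y, Smul n (A y) = B (Smul n y) := fun y => key_step n (Multiplicative.toAdd y)
  induction k using Int.induction_on with
  | zero => simp
  | succ m ih =>
    intro x
    have h1 : (A ^ ((m : ℤ) + 1)) x = (A ^ (m : ℤ)) (A x) := by
      rw [zpow_add_one, MulAut.mul_apply]
    rw [h1, ih (A x), hstep, ← MulAut.mul_apply, ← zpow_add_one]
  | pred m ih =>
    intro x
    have h1 : (A ^ ((-m : ℤ) - 1)) x = (A ^ (-m : ℤ)) (A⁻¹ x) := by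
      rw [zpow_sub_one, MulAut.mul_apply]
    have h2 : Smul n (A⁻¹ x) = B⁻¹ (Smul n x) := by
      have h3 := hstep (A⁻¹ x)
      rw [← MulAut.mul_apply, mul_inv_cancel, MulAut.one_apply] at h3
      rw [h3, ← MulAut.mul_apply, inv_mul_cancel, MulAut.one_apply]
    rw [h1, ih (A⁻¹ x), h2, ← MulAut.mul_apply, ← zpow_sub_one]

def quotMap (n : ℕ) : WrGroup →* WrModGroup n :=
  SemidirectProduct.map (Smul n) (MonoidHom.id _) (by
    intro g
    refine MonoidHom.ext fun x => ?_
    show Smul n ((wrAction g) x) = (wrActionZ n g) (Smul n x)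
    rw [wrAction, wrActionZ, zpowersHom_apply, zpowersHom_apply]
    exact key_zpow n (Multiplicative.toAdd g) x)

open SemidirectProduct in
lemma sumMod_surjective (n : ℕ) [NeZero n] : Surjective (sumModMap n) := by
  intro h
  induction h using Finsupp.induction with
  | zero => exact ⟨0, map_zero _⟩
  | single_add a b f _ _ ih =>
    obtain ⟨g, hg⟩ := ih
    refine ⟨Finsupp.single (a.val : ℤ) b + g, ?_⟩
    rw [map_add, hg]
    congr 1
    show Finsupp.mapDomain _ _ = _
    rw [Finsupp.mapDomain_single]
    congr 1
    push_cast
    simp [ZMod.natCast_val, ZMod.cast_id]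

open SemidirectProduct in
lemma quotMap_surjective (n : ℕ) [NeZero n] : Surjective (quotMap n) := by
  intro x
  obtain ⟨f, hf⟩ := sumMod_surjective n (Multiplicative.toAdd (SemidirectProduct.left x))
  refine ⟨⟨Multiplicative.ofAdd f, SemidirectProduct.right x⟩, ?_⟩
  show SemidirectProduct.map _ _ _ _ = x
  apply SemidirectProduct.ext
  · show Smul n (Multiplicative.ofAdd f) = _
    exact hf
  · rfl

open SemidirectProduct in
lemma mem_map_inl {n : ℕ} (A : Subgroup (Multiplicative (ZMod n →₀ ℤ))) (x : WrModGroup n) :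
    x ∈ A.map (inl (φ := wrActionZ n)) ↔
      SemidirectProduct.right x = 1 ∧ SemidirectProduct.left x ∈ A := by
  constructor
  · rintro ⟨a, ha, rfl⟩
    exact ⟨rfl, ha⟩
  · rintro ⟨h1, h2⟩
    refine ⟨SemidirectProduct.left x, h2, ?_⟩
    apply SemidirectProduct.ext
    · rfl
    · exact h1.symm

lemma isPolyZ_of_equiv {Q Q' : Type} [Group Q] [Group Q'] (e : Q ≃* Q')
    (h : IsPolyZ Q) : IsPolyZ Q' := by
  obtain ⟨n, s, h0, hlast, hstep⟩ := h
  refine ⟨n, fun i => (s i).map e.toMonoidHom, ?_, ?_, ?_⟩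
  · show (s 0).map e.toMonoidHom = ⊥
    rw [h0]; exact Subgroup.map_bot _
  · show (s (Fin.last n)).map e.toMonoidHom = ⊤
    rw [hlast]; exact Subgroup.map_top_of_surjective _ e.surjective
  · intro i
    obtain ⟨hle, f, hf, hker⟩ := hstep i
    refine ⟨Subgroup.map_mono hle, f.comp (e.subgroupMap (s i.succ)).symm.toMonoidHom,
      hf.comp (e.subgroupMap (s i.succ)).symm.surjective, ?_⟩
    ext x
    rw [MonoidHom.mem_ker]
    have hcoe : ((e.subgroupMap (s i.succ)).symm x : Q) = e.symm (x : Q') := by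
      simp [MulEquiv.subgroupMap_symm_apply]
      rfl
    constructor
    · intro hx
      have hk : (e.subgroupMap (s i.succ)).symm x ∈ f.ker := MonoidHom.mem_ker.2 hx
      rw [hker] at hk
      have hmem : ((e.subgroupMap (s i.succ)).symm x : Q) ∈ s i.castSucc :=
        (Subgroup.mem_subgroupOf).1 hk
      rw [hcoe] at hmem
      exact (Subgroup.mem_subgroupOf).2 (Subgroup.mem_map_equiv.2 hmem)
    · intro hx
      have hmem : e.symm (x : Q') ∈ s i.castSucc :=
        Subgroup.mem_map_equiv.1 ((Subgroup.mem_subgroupOf).1 hx)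
      rw [← hcoe] at hmem
      have hk := (Subgroup.mem_subgroupOf).2 hmem
      rw [← hker] at hk
      exact MonoidHom.mem_ker.1 hk

lemma isVirtAb_of_equiv {Q Q' : Type} [Group Q] [Group Q'] (e : Q ≃* Q')
    (h : IsVirtuallyAbelian Q) : IsVirtuallyAbelian Q' := by
  obtain ⟨H, hidx, hcomm⟩ := h
  refine ⟨H.comap e.symm.toMonoidHom, ?_, ?_⟩
  · rwa [Subgroup.index_comap_of_surjective _ e.symm.surjective]
  · intro a b
    have ha : e.symm (a : Q') ∈ H := a.2
    have hb : e.symm (b : Q') ∈ H := b.2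
    have h1 := hcomm ⟨_, ha⟩ ⟨_, hb⟩
    have h2 : e.symm (a : Q') * e.symm (b : Q') = e.symm (b : Q') * e.symm (a : Q') :=
      congrArg Subtype.val h1
    apply Subtype.ext
    show ((a : Q') * (b : Q')) = ((b : Q') * (a : Q'))
    apply e.symm.injective
    rw [map_mul, map_mul, h2]

lemma isPolyZ_multZ : IsPolyZ (Multiplicative ℤ) := by
  refine ⟨1, ![⊥, ⊤], rfl, rfl, ?_⟩
  intro i
  fin_cases i
  constructor
  · show (⊥ : Subgroup (Multiplicative ℤ)) ≤ ⊤
    exact bot_le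
  · refine ⟨Subgroup.topEquiv.toMonoidHom, ?_, ?_⟩
    · intro m
      exact ⟨⟨m, trivial⟩, rfl⟩
    show Subgroup.topEquiv.toMonoidHom.ker = Subgroup.subgroupOf ⊥ ⊤
    rw [Subgroup.bot_subgroupOf]
    ext x
    simp [MonoidHom.mem_ker, Subgroup.mem_bot, Subgroup.topEquiv]

lemma isVirtAb_multZ : IsVirtuallyAbelian (Multiplicative ℤ) :=
  ⟨⊤, by rw [Subgroup.index_top]; exact one_ne_zero, fun a b => mul_comm a b⟩

lemma az_pow_apply (n : ℕ) (m : ℕ) :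
    ∀ (g : Multiplicative (ZMod n →₀ ℤ)) (j : ZMod n),
    Multiplicative.toAdd
        (((AddEquiv.toMultiplicative (shiftZAut n) : MulAut (Multiplicative (ZMod n →₀ ℤ))) ^ m) g) j
      = Multiplicative.toAdd g (-(m : ZMod n) + j) := by
  induction m with
  | zero => intro g j; simp
  | succ m ih =>
    intro g j
    set B : MulAut (Multiplicative (ZMod n →₀ ℤ)) := AddEquiv.toMultiplicative (shiftZAut n)
    have h1 : (B ^ (m + 1)) g = (B ^ m) (B g) := by rw [pow_succ, MulAut.mul_apply]
    rw [h1, ih (B g) j]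
    have h2 : Multiplicative.toAdd (B g) (-(m : ZMod n) + j)
        = Multiplicative.toAdd g ((Equiv.addLeft (1 : ZMod n)).symm (-(m : ZMod n) + j)) := by
      show Finsupp.equivMapDomain _ _ _ = _
      rw [Finsupp.equivMapDomain_apply]
    rw [h2]
    congr 1
    simp only [Equiv.symm_apply_eq, Equiv.coe_addLeft]
    push_cast
    ring

lemma az_pow_n (n : ℕ) :
    ((AddEquiv.toMultiplicative (shiftZAut n) : MulAut (Multiplicative (ZMod n →₀ ℤ))) ^ (n : ℕ))
      = 1 := by
  refine MulEquiv.ext fun g => ?_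
  show _ = g
  apply Multiplicative.toAdd.injective
  refine Finsupp.ext fun j => ?_
  rw [az_pow_apply]
  simp

lemma wrActionZ_dvd (n : ℕ) {k : ℤ} (h : (n : ℤ) ∣ k) (x : Multiplicative (ZMod n →₀ ℤ)) :
    wrActionZ n (Multiplicative.ofAdd k) x = x := by
  obtain ⟨c, rfl⟩ := h
  show ((AddEquiv.toMultiplicative (shiftZAut n) : MulAut (Multiplicative (ZMod n →₀ ℤ)))
     ^ (Multiplicative.toAdd (Multiplicative.ofAdd ((n : ℤ) * c)))) x = x
  have h1 : (AddEquiv.toMultiplicative (shiftZAut n) : MulAut (Multiplicative (ZMod n →₀ ℤ)))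
      ^ ((n : ℤ) * c) = 1 := by
    rw [zpow_mul, zpow_natCast, az_pow_n, one_zpow]
  rw [show Multiplicative.toAdd (Multiplicative.ofAdd ((n : ℤ) * c)) = (n : ℤ) * c from rfl, h1]
  rfl

def modHom (n : ℕ) : WrModGroup n →* Multiplicative (ZMod n) :=
  (AddMonoidHom.toMultiplicative (Int.castAddHom (ZMod n))).comp
    (SemidirectProduct.rightHom (φ := wrActionZ n))

lemma mem_ker_modHom {n : ℕ} (x : WrModGroup n) :
    x ∈ (modHom n).ker ↔ (n : ℤ) ∣ Multiplicative.toAdd (SemidirectProduct.right x) := by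
  rw [MonoidHom.mem_ker]
  constructor
  · intro h
    have h2 : ((Multiplicative.toAdd (SemidirectProduct.right x) : ℤ) : ZMod n) = 0 :=
      congrArg Multiplicative.toAdd h
    exact (ZMod.intCast_zmod_eq_zero_iff_dvd _ _).1 h2
  · intro h
    have h2 : ((Multiplicative.toAdd (SemidirectProduct.right x) : ℤ) : ZMod n) = 0 :=
      (ZMod.intCast_zmod_eq_zero_iff_dvd _ _).2 h
    exact congrArg Multiplicative.ofAdd h2

lemma modHom_surjective (n : ℕ) [NeZero n] : Surjective (modHom n) := by
  intro m
  refine ⟨SemidirectProduct.inr (Multiplicative.ofAdd ((Multiplicative.toAdd m).val : ℤ)), ?_⟩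
  show Multiplicative.ofAdd (((Multiplicative.toAdd
    (SemidirectProduct.rightHom (SemidirectProduct.inr
      (Multiplicative.ofAdd ((Multiplicative.toAdd m).val : ℤ))))) : ℤ) : ZMod n) = m
  rw [SemidirectProduct.rightHom_inr]
  apply Multiplicative.toAdd.injective
  show (((Multiplicative.toAdd m).val : ℤ) : ZMod n) = Multiplicative.toAdd m
  push_cast
  simp [ZMod.natCast_val, ZMod.cast_id]

lemma isVirtAb_wrMod (n : ℕ) [NeZero n] : IsVirtuallyAbelian (WrModGroup n) := by
  refine ⟨(modHom n).ker, ?_, ?_⟩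
  · rw [Subgroup.index_ker, MonoidHom.range_eq_top_of_surjective _ (modHom_surjective n),
      Subgroup.card_top, Nat.card_congr Multiplicative.toAdd, Nat.card_zmod]
    exact NeZero.ne n
  · intro a b
    have ha : (n : ℤ) ∣ Multiplicative.toAdd (SemidirectProduct.right (a : WrModGroup n)) :=
      (mem_ker_modHom _).1 a.2
    have hb : (n : ℤ) ∣ Multiplicative.toAdd (SemidirectProduct.right (b : WrModGroup n)) :=
      (mem_ker_modHom _).1 b.2
    apply Subtype.ext
    show (a : WrModGroup n) * (b : WrModGroup n) = (b : WrModGroup n) * (a : WrModGroup n)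
    apply SemidirectProduct.ext
    · erw [SemidirectProduct.mul_left, SemidirectProduct.mul_left]
      rw [show SemidirectProduct.right (a : WrModGroup n)
          = Multiplicative.ofAdd (Multiplicative.toAdd (SemidirectProduct.right (a : WrModGroup n)))
          from rfl, wrActionZ_dvd n ha]
      rw [show SemidirectProduct.right (b : WrModGroup n)
          = Multiplicative.ofAdd (Multiplicative.toAdd (SemidirectProduct.right (b : WrModGroup n)))
          from rfl, wrActionZ_dvd n hb]
      exact mul_comm _ _
    · erw [SemidirectProduct.mul_right, SemidirectProduct.mul_right]
      exact mul_comm _ _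

def filt (n : ℕ) (i : ℕ) : Subgroup (Multiplicative (ZMod n →₀ ℤ)) :=
  AddSubgroup.toSubgroup (Finsupp.supported ℤ ℤ {j : ZMod n | j.val < i}).toAddSubgroup

lemma mem_filt {n i : ℕ} (x : Multiplicative (ZMod n →₀ ℤ)) :
    x ∈ filt n i ↔ ∀ j : ZMod n, ¬ (j.val < i) → Multiplicative.toAdd x j = 0 := by
  show Multiplicative.toAdd x ∈ Finsupp.supported ℤ ℤ {j : ZMod n | j.val < i} ↔ _
  rw [Finsupp.mem_supported']
  exact Iff.rfl

def ser (n : ℕ) : Fin (n + 1 + 1) → Subgroup (WrModGroup n) := fun i =>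
  if (i : ℕ) ≤ n then (filt n i).map (SemidirectProduct.inl (φ := wrActionZ n)) else ⊤

lemma ser_zero (n : ℕ) : ser n 0 = ⊥ := by
  rw [ser]
  simp only [Fin.val_zero, Nat.zero_le, if_pos]
  have h : filt n 0 = ⊥ := by
    rw [eq_bot_iff]
    intro x hx
    rw [mem_filt] at hx
    have : Multiplicative.toAdd x = 0 := Finsupp.ext fun j => hx j (Nat.not_lt_zero _)
    exact this
  rw [h]; erw [Subgroup.map_bot]

lemma ser_last (n : ℕ) : ser n (Fin.last (n + 1)) = ⊤ := by
  rw [ser]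
  simp

lemma filt_top (n : ℕ) [NeZero n] : filt n n = ⊤ := by
  rw [eq_top_iff]
  intro x _
  rw [mem_filt]
  intro j hj
  exact absurd (ZMod.val_lt j) hj

lemma ser_top_step (n : ℕ) [NeZero n] :
    (filt n n).map (SemidirectProduct.inl (φ := wrActionZ n))
      = (SemidirectProduct.rightHom (φ := wrActionZ n)).ker := by
  rw [filt_top, ← MonoidHom.range_eq_map, SemidirectProduct.range_inl_eq_ker_rightHom]

def evalHom {n : ℕ} (H : Subgroup (WrModGroup n)) (c : ZMod n)
    (hH : ∀ x : ↥H, SemidirectProduct.right (x : WrModGroup n) = 1) :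
    ↥H →* Multiplicative ℤ :=
  MonoidHom.mk' (fun x => Multiplicative.ofAdd
      (Multiplicative.toAdd (SemidirectProduct.left (x : WrModGroup n)) c)) (by
    intro a b
    have hleft : SemidirectProduct.left ((a : WrModGroup n) * (b : WrModGroup n))
        = SemidirectProduct.left (a : WrModGroup n)
          * SemidirectProduct.left (b : WrModGroup n) := by
      erw [SemidirectProduct.mul_left, hH a, map_one]
      rfl
    show Multiplicative.ofAdd
      (Multiplicative.toAdd (SemidirectProduct.left ((a : WrModGroup n) * (b : WrModGroup n))) c)
        = _
    rw [hleft]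
    rfl)

lemma evalHom_apply {n : ℕ} (H : Subgroup (WrModGroup n)) (c : ZMod n)
    (hH : ∀ x : ↥H, SemidirectProduct.right (x : WrModGroup n) = 1) (x : ↥H) :
    evalHom H c hH x = Multiplicative.ofAdd
      (Multiplicative.toAdd (SemidirectProduct.left (x : WrModGroup n)) c) := rfl

lemma isPolyZ_wrMod (n : ℕ) [NeZero n] : IsPolyZ (WrModGroup n) := by
  refine ⟨n + 1, ser n, ser_zero n, ser_last n, ?_⟩
  intro i
  have hisuc : (i.succ : ℕ) = (i : ℕ) + 1 := rfl
  have hicast : (i.castSucc : ℕ) = (i : ℕ) := rfl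
  rcases lt_or_eq_of_le (Nat.lt_succ_iff.mp i.isLt) with hlt | heq
  · -- i.val < n : filtration step
    have hcast : ser n i.castSucc = (filt n i).map (SemidirectProduct.inl (φ := wrActionZ n)) := by
      rw [ser, hicast, if_pos (le_of_lt hlt)]
      rfl
    have hsucc : ser n i.succ
        = (filt n ((i : ℕ) + 1)).map (SemidirectProduct.inl (φ := wrActionZ n)) := by
      rw [ser, hisuc, if_pos (by omega : (i : ℕ) + 1 ≤ n)]
      rfl
    set c : ZMod n := ((i : ℕ) : ZMod n) with hc
    have hcval : c.val = (i : ℕ) := ZMod.val_cast_of_lt hlt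
    have hright : ∀ x : ↥(ser n i.succ), SemidirectProduct.right (x : WrModGroup n) = 1 := by
      intro x
      have h : (x : WrModGroup n)
          ∈ (filt n ((i : ℕ) + 1)).map (SemidirectProduct.inl (φ := wrActionZ n)) := by
        rw [← hsucc]; exact x.2
      exact ((mem_map_inl _ _).1 h).1
    constructor
    · rw [hcast, hsucc]
      intro x hx
      erw [mem_map_inl] at hx ⊢
      refine ⟨hx.1, ?_⟩
      rw [mem_filt] at hx ⊢
      intro j hj
      exact hx.2 j (fun h => hj (Nat.lt_succ_of_lt h))
    · refine ⟨evalHom _ c hright, ?_, ?_⟩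
      · intro m
        refine ⟨⟨SemidirectProduct.inl
          (Multiplicative.ofAdd (Finsupp.single c (Multiplicative.toAdd m))), ?_⟩, ?_⟩
        · erw [hsucc, mem_map_inl]
          refine ⟨SemidirectProduct.right_inl _, ?_⟩
          rw [SemidirectProduct.left_inl, mem_filt]
          intro j hj
          show Finsupp.single c (Multiplicative.toAdd m) j = 0
          rw [Finsupp.single_apply, if_neg]
          intro hcj
          apply hj
          rw [← hcj, hcval]
          exact Nat.lt_succ_self _
        · rw [evalHom_apply]
          rw [show SemidirectProduct.left ((SemidirectProduct.inl (Multiplicative.ofAdd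
              (Finsupp.single c (Multiplicative.toAdd m)))) : WrModGroup n)
            = Multiplicative.ofAdd (Finsupp.single c (Multiplicative.toAdd m)) from rfl]
          show Multiplicative.ofAdd (Finsupp.single c (Multiplicative.toAdd m) c) = m
          rw [Finsupp.single_eq_same]
          rfl
      · ext x
        have hxmem : (x : WrModGroup n)
            ∈ (filt n ((i : ℕ) + 1)).map (SemidirectProduct.inl (φ := wrActionZ n)) := by
          rw [← hsucc]; exact x.2
        rw [mem_map_inl] at hxmem
        constructor
        · intro hx
          have hx1 : evalHom (ser n i.succ) c hright x = 1 := hx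
          have hval : Multiplicative.toAdd (SemidirectProduct.left (x : WrModGroup n)) c = 0 :=
            congrArg Multiplicative.toAdd hx1
          erw [Subgroup.mem_subgroupOf, hcast, mem_map_inl]
          refine ⟨hxmem.1, ?_⟩
          rw [mem_filt]
          intro j hj
          by_cases hj2 : j.val < (i : ℕ) + 1
          · have hjv : j.val = (i : ℕ) := Nat.le_antisymm (Nat.lt_succ_iff.mp hj2)
              (Nat.le_of_not_lt hj)
            have hjc : j = c := by
              have h1 : ((j.val : ℕ) : ZMod n) = j := by
                rw [ZMod.natCast_val, ZMod.cast_id]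
              rw [← h1, hjv]
            rw [hjc]
            exact hval
          · exact (mem_filt _).1 hxmem.2 j hj2
        · intro hx
          erw [Subgroup.mem_subgroupOf, hcast, mem_map_inl] at hx
          have h0 := (mem_filt _).1 hx.2 c (by rw [hcval]; exact Nat.lt_irrefl _)
          show evalHom (ser n i.succ) c hright x = 1
          exact congrArg Multiplicative.ofAdd h0
  · -- i.val = n : top step
    have hcast : ser n i.castSucc = (SemidirectProduct.rightHom (φ := wrActionZ n)).ker := by
      rw [ser, hicast, if_pos (le_of_eq heq), heq]
      erw [ser_top_step]
    have hsucc : ser n i.succ = ⊤ := by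
      rw [ser, hisuc, heq, if_neg (Nat.not_succ_le_self n)]
    constructor
    · rw [hsucc]; exact le_top
    · refine ⟨(SemidirectProduct.rightHom (φ := wrActionZ n)).comp (ser n i.succ).subtype, ?_, ?_⟩
      · intro m
        have hmem : (SemidirectProduct.inr m : WrModGroup n) ∈ ser n i.succ := by
          rw [hsucc]; exact Subgroup.mem_top _
        refine ⟨⟨_, hmem⟩, ?_⟩
        exact SemidirectProduct.rightHom_inr (φ := wrActionZ n) m
      · ext x
        rw [Subgroup.mem_subgroupOf, hcast]
        exact Iff.rfl

theorem stmt_12' :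
    ∀ g : WrGroup, g ≠ 1 →
      ∃ (K : Subgroup WrGroup) (hK : K.Normal), g ∉ K ∧
        (letI := hK
         IsPolyZ (WrGroup ⧸ K) ∧ IsVirtuallyAbelian (WrGroup ⧸ K)) := by
  intro g hg
  by_cases hr : SemidirectProduct.right g = 1
  · -- left component nontrivial; use quotient to WrModGroup n
    have hl : SemidirectProduct.left g ≠ 1 := by
      intro h
      exact hg (SemidirectProduct.ext h hr)
    set f : ℤ →₀ ℤ := Multiplicative.toAdd (SemidirectProduct.left g) with hf
    have hf0 : f ≠ 0 := hl
    have hsupp : f.support.Nonempty := Finsupp.support_nonempty_iff.2 hf0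
    obtain ⟨j, hj⟩ := hsupp
    set n : ℕ := (f.support.max' ⟨j, hj⟩ - f.support.min' ⟨j, hj⟩).toNat + 1 with hn
    haveI : NeZero n := ⟨Nat.succ_ne_zero _⟩
    have hinj : Set.InjOn (fun a : ℤ => (a : ZMod n)) ↑f.support := by
      intro a ha b hb hab
      have hmod : (n : ℤ) ∣ b - a := by
        have := (ZMod.intCast_eq_intCast_iff a b n).1 hab
        exact Int.ModEq.dvd this
      have hbound : |b - a| < (n : ℤ) := by
        have hmax_a := f.support.le_max' a ha
        have hmin_a := f.support.min'_le a ha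
        have hmax_b := f.support.le_max' b hb
        have hmin_b := f.support.min'_le b hb
        have hd : (0 : ℤ) ≤ f.support.max' ⟨j, hj⟩ - f.support.min' ⟨j, hj⟩ := by omega
        have : ((f.support.max' ⟨j, hj⟩ - f.support.min' ⟨j, hj⟩).toNat : ℤ)
            = f.support.max' ⟨j, hj⟩ - f.support.min' ⟨j, hj⟩ := Int.toNat_of_nonneg hd
        rw [hn]
        push_cast
        rw [this]
        rw [abs_lt]
        omega
      have := Int.eq_zero_of_abs_lt_dvd hmod hbound
      omega
    have hne : sumModMap n f ≠ 0 := by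
      intro h0
      have := Finsupp.mapDomain_apply' (↑f.support : Set ℤ) f subset_rfl hinj hj
      rw [show Finsupp.mapDomain (fun a : ℤ => (a : ZMod n)) f = sumModMap n f from rfl, h0] at this
      simp only [Finsupp.coe_zero, Pi.zero_apply] at this
      exact (Finsupp.mem_support_iff.1 hj) this.symm
    refine ⟨(quotMap n).ker, MonoidHom.normal_ker _, ?_, ?_, ?_⟩
    · intro hmem
      have h1 : quotMap n g = 1 := hmem
      have h2 : SemidirectProduct.left (quotMap n g) = 1 := by rw [h1]; rfl
      rw [show SemidirectProduct.left (quotMap n g) = Smul n (SemidirectProduct.left g)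
        from rfl] at h2
      have h3 : sumModMap n f = 0 := congrArg Multiplicative.toAdd h2
      exact hne h3
    · exact isPolyZ_of_equiv
        (QuotientGroup.quotientKerEquivOfSurjective (quotMap n) (quotMap_surjective n)).symm
        (isPolyZ_wrMod n)
    · exact isVirtAb_of_equiv
        (QuotientGroup.quotientKerEquivOfSurjective (quotMap n) (quotMap_surjective n)).symm
        (isVirtAb_wrMod n)
  · -- right component nontrivial; use rightHom
    refine ⟨(show WrGroup →* Multiplicative ℤ from SemidirectProduct.rightHom (φ := wrAction)).ker,
      MonoidHom.normal_ker _, ?_, ?_, ?_⟩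
    · intro hmem
      exact hr hmem
    · exact isPolyZ_of_equiv
        (QuotientGroup.quotientKerEquivOfSurjective _
          (SemidirectProduct.rightHom_surjective (φ := wrAction))).symm isPolyZ_multZ
    · exact isVirtAb_of_equiv
        (QuotientGroup.quotientKerEquivOfSurjective _
          (SemidirectProduct.rightHom_surjective (φ := wrAction))).symm isVirtAb_multZ

/-- The wreath product `ℤ ≀ ℤ` is residually {poly-`ℤ` and virtually
abelian}: every nontrivial element survives in a quotient which is both poly-`ℤ` and
virtually abelian. -/
theorem stmt_12 :
    ∀ g : WrGroup, g ≠ 1 →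
      ∃ (K : Subgroup WrGroup) (hK : K.Normal), g ∉ K ∧
        (letI := hK
         IsPolyZ (WrGroup ⧸ K) ∧ IsVirtuallyAbelian (WrGroup ⧸ K)) := by
  exact stmt_12'
end
end
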